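/- Suppose the Swendsen-Wang dynamics on edge (random-cluster) configurations, with stationary distribution ρ equal to the edge marginal of a joint Edwards-Sokal measure ν, satisfies Ent_ρ(P̃_SW g) ≤ (1−δ)·Ent_ρ(g) for all nonnegative functions g of the edges. Then the Swendsen-Wang dynamics on spin configurations, with stationary distribution μ equal to the spin marginal of ν, satisfies Ent_μ(P_SW^ℓ f) ≤ (1−δ)^{ℓ−1}·Ent_μ(f) for all ℓ ≥ 1 and all nonnegative functions f of the spins. -/

import Mathlib

open scoped Classical BigOperators

noncomputable def ent {Ω : Type*} [Fintype Ω] (π f : Ω → ℝ) : ℝ :=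
  (∑ x, π x * f x * Real.log (f x)) - (∑ x, π x * f x) * Real.log (∑ x, π x * f x)

noncomputable def condMean {Ω α : Type*} [Fintype Ω] (ν : Ω → ℝ) (g : Ω → α)
    (f : Ω → ℝ) (x : Ω) : ℝ :=
  (∑ y, if g y = g x then ν y * f y else 0) / (∑ y, if g y = g x then ν y else 0)

noncomputable def avgCondEnt {Ω α : Type*} [Fintype Ω] (ν : Ω → ℝ) (g : Ω → α)
    (f : Ω → ℝ) : ℝ :=
  ∑ x, ν x * f x * (Real.log (f x) - Real.log (condMean ν g f x))

noncomputable def matMulVec {Ω : Type*} [Fintype Ω] (P : Ω → Ω → ℝ) (f : Ω → ℝ) (x : Ω) : ℝ :=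
  ∑ y, P x y * f y

noncomputable def dirForm {Ω : Type*} [Fintype Ω] (π : Ω → ℝ) (P : Ω → Ω → ℝ)
    (f g : Ω → ℝ) : ℝ :=
  ∑ x, π x * f x * (g x - matMulVec P g x)

noncomputable def stepDist {Ω : Type*} [Fintype Ω] (P : Ω → Ω → ℝ) (ζ : Ω → ℝ) (y : Ω) : ℝ :=
  ∑ x, ζ x * P x y

noncomputable def adjointMat {Ω : Type*} [Fintype Ω] (π : Ω → ℝ) (P : Ω → Ω → ℝ)
    (x y : Ω) : ℝ :=
  π y * P y x / π x

noncomputable def matComp {Ω : Type*} [Fintype Ω] (P Q : Ω → Ω → ℝ) (x y : Ω) : ℝ :=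
  ∑ z, P x z * Q z y

/-- Weight of a joint spin/edge (Edwards–Sokal) configuration: `p^{|A|}(1-p)^{|E|-|A|} 1(A ⊆ M(σ))`
with `p = 1 - e^{-β}`. -/
noncomputable def esWeight {V : Type*} [Fintype V] [DecidableEq V]
    (E : Finset (V × V)) (q : ℕ) (β : ℝ) (z : (V → Fin q) × Finset (V × V)) : ℝ :=
  (1 - Real.exp (-β)) ^ z.2.card * Real.exp (-β) ^ (E.card - z.2.card) *
    (if z.2 ⊆ E.filter (fun e => z.1 e.1 = z.1 e.2) then 1 else 0)

/-- The Edwards–Sokal joint measure. -/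
noncomputable def esMeasure {V : Type*} [Fintype V] [DecidableEq V]
    (E : Finset (V × V)) (q : ℕ) (β : ℝ) (z : (V → Fin q) × Finset (V × V)) : ℝ :=
  esWeight E q β z / ∑ w : (V → Fin q) × Finset (V × V), esWeight E q β w

/-- The ferromagnetic `q`-state Potts Gibbs measure: `μ(σ) ∝ exp(-β |D(σ)|)`. -/
noncomputable def pottsMeasure {V : Type*} [Fintype V] [DecidableEq V]
    (E : Finset (V × V)) (q : ℕ) (β : ℝ) (σ : V → Fin q) : ℝ :=
  Real.exp (-β * ((E.filter (fun e => σ e.1 ≠ σ e.2)).card : ℝ)) /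
    ∑ τ : V → Fin q, Real.exp (-β * ((E.filter (fun e => τ e.1 ≠ τ e.2)).card : ℝ))

/-- Swendsen–Wang transition matrix on spin configurations:
`P(σ,τ) = ∑_A ν(A|σ) ν(τ|A)`. -/
noncomputable def swMatrix {V : Type*} [Fintype V] [DecidableEq V]
    (E : Finset (V × V)) (q : ℕ) (β : ℝ) (σ τ : V → Fin q) : ℝ :=
  ∑ A : Finset (V × V),
    (esMeasure E q β (σ, A) / ∑ B : Finset (V × V), esMeasure E q β (σ, B)) *
    (esMeasure E q β (τ, A) / ∑ ρ : V → Fin q, esMeasure E q β (ρ, A))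

/-- Swendsen–Wang transition matrix on edge (random-cluster) configurations:
`P̃(A,B) = ∑_σ ν(σ|A) ν(B|σ)`. -/
noncomputable def swEdgeMatrix {V : Type*} [Fintype V] [DecidableEq V]
    (E : Finset (V × V)) (q : ℕ) (β : ℝ) (A B : Finset (V × V)) : ℝ :=
  ∑ σ : V → Fin q,
    (esMeasure E q β (σ, A) / ∑ τ : V → Fin q, esMeasure E q β (τ, A)) *
    (esMeasure E q β (σ, B) / ∑ B' : Finset (V × V), esMeasure E q β (σ, B'))


noncomputable def push {S T : Type*} [Fintype S] [Fintype T] (ν : S → T → ℝ)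
    (g : T → ℝ) (s : S) : ℝ :=
  ∑ t, ν s t / (∑ t', ν s t') * g t

lemma push_nonneg {S T : Type*} [Fintype S] [Fintype T] {ν : S → T → ℝ}
    (hν : ∀ s t, 0 ≤ ν s t) {g : T → ℝ} (hg : ∀ t, 0 ≤ g t) (s : S) :
    0 ≤ push ν g s := by
  apply Finset.sum_nonneg
  intro t _
  exact mul_nonneg (div_nonneg (hν s t) (Finset.sum_nonneg fun t' _ => hν s t')) (hg t)

/-- Data processing inequality for entropy. -/
lemma dp_ent {S T : Type*} [Fintype S] [Fintype T] (ν : S → T → ℝ)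
    (hν : ∀ s t, 0 ≤ ν s t) (g : T → ℝ) (hg : ∀ t, 0 ≤ g t) :
    ent (fun s => ∑ t, ν s t) (push ν g) ≤ ent (fun t => ∑ s, ν s t) g := by
  set μ : S → ℝ := fun s => ∑ t, ν s t with hμ
  have hμ0 : ∀ s, 0 ≤ μ s := fun s => Finset.sum_nonneg fun t _ => hν s t
  have key1 : ∀ s, μ s * push ν g s = ∑ t, ν s t * g t := by
    intro s
    rcases eq_or_lt_of_le (hμ0 s) with h | h
    · have hz : ∀ t, ν s t = 0 := by
        intro t
        have := (Finset.sum_eq_zero_iff_of_nonneg (fun t _ => hν s t)).mp h.symm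
        exact this t (Finset.mem_univ t)
      simp [hz, h.symm]
    · rw [push, Finset.mul_sum]
      apply Finset.sum_congr rfl
      intro t _
      have h' : (∑ t', ν s t') ≠ 0 := h.ne'
      simp only [hμ]
      field_simp
  have key2 : ∀ s, μ s * push ν g s * Real.log (push ν g s)
      ≤ ∑ t, ν s t * g t * Real.log (g t) := by
    intro s
    rcases eq_or_lt_of_le (hμ0 s) with h | h
    · have hz : ∀ t, ν s t = 0 := by
        intro t
        have := (Finset.sum_eq_zero_iff_of_nonneg (fun t _ => hν s t)).mp h.symm
        exact this t (Finset.mem_univ t)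
      simp [hz, h.symm]
    · have hw : ∀ t ∈ Finset.univ, (0:ℝ) ≤ ν s t / μ s :=
        fun t _ => div_nonneg (hν s t) (hμ0 s)
      have hw1 : ∑ t, ν s t / μ s = 1 := by
        rw [← Finset.sum_div]; exact div_self h.ne'
      have hmem : ∀ t ∈ Finset.univ, g t ∈ Set.Ici (0:ℝ) := fun t _ => hg t
      have hj := Real.convexOn_mul_log.map_sum_le hw hw1 hmem
      simp only [smul_eq_mul] at hj
      have hpush : push ν g s = ∑ t, ν s t / μ s * g t := rfl
      rw [hpush, mul_assoc]
      calc μ s * ((∑ t, ν s t / μ s * g t) * Real.log (∑ t, ν s t / μ s * g t))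
          ≤ μ s * ∑ t, ν s t / μ s * (g t * Real.log (g t)) := by
            apply mul_le_mul_of_nonneg_left _ (hμ0 s)
            exact hj
        _ = ∑ t, ν s t * g t * Real.log (g t) := by
            rw [Finset.mul_sum]
            apply Finset.sum_congr rfl
            intro t _
            field_simp
  have hmean : ∑ s, μ s * push ν g s = ∑ t, (∑ s, ν s t) * g t := by
    rw [Finset.sum_congr rfl fun s _ => key1 s, Finset.sum_comm]
    simp [Finset.sum_mul]
  rw [ent, ent, hmean]
  apply sub_le_sub_right
  calc ∑ s, μ s * push ν g s * Real.log (push ν g s)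
      ≤ ∑ s, ∑ t, ν s t * g t * Real.log (g t) := Finset.sum_le_sum fun s _ => key2 s
    _ = ∑ t, (∑ s, ν s t) * g t * Real.log (g t) := by
        rw [Finset.sum_comm]; simp [Finset.sum_mul]

lemma spin_step {V : Type*} [Fintype V] [DecidableEq V]
    (E : Finset (V × V)) (q : ℕ) (β : ℝ) (f : (V → Fin q) → ℝ) :
    matMulVec (swMatrix E q β) f =
      push (fun σ A => esMeasure E q β (σ, A))
        (push (fun (A : Finset (V × V)) σ => esMeasure E q β (σ, A)) f) := by
  funext σ
  simp only [matMulVec, swMatrix, push, Finset.sum_mul]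
  rw [Finset.sum_comm]
  apply Finset.sum_congr rfl
  intro A _
  rw [Finset.mul_sum]
  apply Finset.sum_congr rfl
  intro τ _
  ring

lemma edge_step {V : Type*} [Fintype V] [DecidableEq V]
    (E : Finset (V × V)) (q : ℕ) (β : ℝ) (g : Finset (V × V) → ℝ) :
    matMulVec (swEdgeMatrix E q β) g =
      push (fun (A : Finset (V × V)) σ => esMeasure E q β (σ, A))
        (push (fun σ A => esMeasure E q β (σ, A)) g) := by
  funext A
  simp only [matMulVec, swEdgeMatrix, push, Finset.sum_mul]
  rw [Finset.sum_comm]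
  apply Finset.sum_congr rfl
  intro σ _
  rw [Finset.mul_sum]
  apply Finset.sum_congr rfl
  intro B _
  ring

lemma sw_iterate {V : Type*} [Fintype V] [DecidableEq V]
    (E : Finset (V × V)) (q : ℕ) (β : ℝ) (k : ℕ) (f : (V → Fin q) → ℝ) :
    (matMulVec (swMatrix E q β))^[k + 1] f =
      push (fun σ A => esMeasure E q β (σ, A))
        ((matMulVec (swEdgeMatrix E q β))^[k]
          (push (fun (A : Finset (V × V)) σ => esMeasure E q β (σ, A)) f)) := by
  induction k with
  | zero => simpa using spin_step E q β f
  | succ k ih =>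
      rw [Function.iterate_succ_apply', ih, spin_step, Function.iterate_succ_apply',
        edge_step]

/-- If the edge (random-cluster) Swendsen–Wang dynamics, with stationary measure the edge
marginal `ρ` of the Edwards–Sokal measure `ν`, contracts entropy at rate `δ`, then the
spin Swendsen–Wang dynamics, with stationary measure the spin marginal `μ`, satisfies
`Ent_μ(P_SW^ℓ f) ≤ (1-δ)^{ℓ-1} Ent_μ(f)` for all `ℓ ≥ 1` and nonnegative `f`. -/
theorem stmt18 {V : Type*} [Fintype V] [DecidableEq V]
    (E : Finset (V × V)) (q : ℕ) (hq : 2 ≤ q) (β : ℝ) (hβ : 0 < β)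
    (δ : ℝ) (hδ0 : 0 < δ) (hδ1 : δ ≤ 1)
    (hedge : ∀ g : Finset (V × V) → ℝ, (∀ A, 0 ≤ g A) →
      ent (fun A => ∑ σ : V → Fin q, esMeasure E q β (σ, A))
          (matMulVec (swEdgeMatrix E q β) g) ≤
        (1 - δ) * ent (fun A => ∑ σ : V → Fin q, esMeasure E q β (σ, A)) g) :
    ∀ ℓ : ℕ, 1 ≤ ℓ → ∀ f : (V → Fin q) → ℝ, (∀ σ, 0 ≤ f σ) →
      ent (fun σ => ∑ A : Finset (V × V), esMeasure E q β (σ, A))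
          ((matMulVec (swMatrix E q β))^[ℓ] f) ≤
        (1 - δ) ^ (ℓ - 1) *
          ent (fun σ => ∑ A : Finset (V × V), esMeasure E q β (σ, A)) f := by
  have hν : ∀ (σ : V → Fin q) (A : Finset (V × V)), 0 ≤ esMeasure E q β (σ, A) := by
    intro σ A
    apply div_nonneg
    · apply mul_nonneg
      apply mul_nonneg
      · apply pow_nonneg
        have : Real.exp (-β) ≤ 1 := Real.exp_le_one_iff.mpr (by linarith)
        linarith
      · exact pow_nonneg (Real.exp_nonneg _) _
      · positivity
    · apply Finset.sum_nonneg
      intro w _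
      apply mul_nonneg
      apply mul_nonneg
      · apply pow_nonneg
        have : Real.exp (-β) ≤ 1 := Real.exp_le_one_iff.mpr (by linarith)
        linarith
      · exact pow_nonneg (Real.exp_nonneg _) _
      · positivity
  have hedgeMat : ∀ A B, 0 ≤ swEdgeMatrix E q β A B := by
    intro A B
    apply Finset.sum_nonneg
    intro σ _
    apply mul_nonneg
    · exact div_nonneg (hν σ A) (Finset.sum_nonneg fun τ _ => hν τ A)
    · exact div_nonneg (hν σ B) (Finset.sum_nonneg fun B' _ => hν σ B')
  have hedgeNonneg : ∀ (k : ℕ) (g : Finset (V × V) → ℝ), (∀ A, 0 ≤ g A) →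
      ∀ A, 0 ≤ (matMulVec (swEdgeMatrix E q β))^[k] g A := by
    intro k
    induction k with
    | zero => intro g hg A; simpa using hg A
    | succ k ih =>
        intro g hg A
        rw [Function.iterate_succ_apply']
        apply Finset.sum_nonneg
        intro B _
        exact mul_nonneg (hedgeMat A B) (ih g hg B)
  have contract : ∀ (k : ℕ) (g : Finset (V × V) → ℝ), (∀ A, 0 ≤ g A) →
      ent (fun A => ∑ σ : V → Fin q, esMeasure E q β (σ, A))
        ((matMulVec (swEdgeMatrix E q β))^[k] g) ≤
      (1 - δ) ^ k * ent (fun A => ∑ σ : V → Fin q, esMeasure E q β (σ, A)) g := by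
    intro k
    induction k with
    | zero => intro g hg; simp
    | succ k ih =>
        intro g hg
        rw [Function.iterate_succ_apply', pow_succ, mul_comm ((1-δ)^k), mul_assoc]
        calc ent (fun A => ∑ σ : V → Fin q, esMeasure E q β (σ, A))
              (matMulVec (swEdgeMatrix E q β) ((matMulVec (swEdgeMatrix E q β))^[k] g))
            ≤ (1 - δ) * ent (fun A => ∑ σ : V → Fin q, esMeasure E q β (σ, A))
              ((matMulVec (swEdgeMatrix E q β))^[k] g) :=
              hedge _ (hedgeNonneg k g hg)
          _ ≤ (1 - δ) * ((1 - δ) ^ k *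
              ent (fun A => ∑ σ : V → Fin q, esMeasure E q β (σ, A)) g) :=
              mul_le_mul_of_nonneg_left (ih g hg) (by linarith)
  intro ℓ hℓ f hf
  obtain ⟨k, rfl⟩ : ∃ k, ℓ = k + 1 := ⟨ℓ - 1, (Nat.succ_pred_eq_of_pos hℓ).symm⟩
  simp only [Nat.add_sub_cancel]
  rw [sw_iterate]
  set νs : (V → Fin q) → Finset (V × V) → ℝ := fun σ A => esMeasure E q β (σ, A) with hνs
  set νe : Finset (V × V) → (V → Fin q) → ℝ := fun A σ => esMeasure E q β (σ, A) with hνe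
  have hg0 : ∀ A, 0 ≤ push νe f A := push_nonneg (fun A σ => hν σ A) hf
  have hk : ∀ A, 0 ≤ (matMulVec (swEdgeMatrix E q β))^[k] (push νe f) A :=
    hedgeNonneg k _ hg0
  calc ent (fun σ => ∑ A : Finset (V × V), esMeasure E q β (σ, A))
        (push νs ((matMulVec (swEdgeMatrix E q β))^[k] (push νe f)))
      ≤ ent (fun A => ∑ σ : V → Fin q, esMeasure E q β (σ, A))
        ((matMulVec (swEdgeMatrix E q β))^[k] (push νe f)) :=
        dp_ent νs (fun σ A => hν σ A) _ hk
    _ ≤ (1 - δ) ^ k * ent (fun A => ∑ σ : V → Fin q, esMeasure E q β (σ, A))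
        (push νe f) := contract k _ hg0
    _ ≤ (1 - δ) ^ k * ent (fun σ => ∑ A : Finset (V × V), esMeasure E q β (σ, A)) f := by
        apply mul_le_mul_of_nonneg_left _ (pow_nonneg (by linarith) k)
        exact dp_ent νe (fun A σ => hν σ A) f hf
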